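/- Let two disjoint strongly sign controllable components G₁ and G₂ (each a path state graph with an input node at a terminal node) be joined by two bridge edges (k₁,l₁) and (k₂,l₂) with k₁,k₂ ∈ V₁^S, l₁,l₂ ∈ V₂^S. If k₂ and l₂ are both in N(V_I) (each adjacent to an input node), then the merged graph is strongly sign controllable regardless of the positions of k₁ and l₁. -/
import Mathlib

open scoped Classical

/-- Dedicated node of `α` in `G`: not in `α`, exactly one neighbor in `α`. -/
def ded {V : Type} (G : SimpleGraph V) (α : Finset V) (v : V) : Prop :=
  v ∉ α ∧ (α.filter (G.Adj v)).card = 1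

/-- Two path state graphs `Fin n₁` and `Fin n₂`, each with one input node
attached at the state node `t₁` (resp. `t₂`), joined by the two bridge edges
`(k₁, l₁)` and `(k₂, l₂)`. -/
def twoPathsBridged (n₁ n₂ : ℕ) (t₁ k₁ k₂ : Fin n₁) (t₂ l₁ l₂ : Fin n₂) :
    SimpleGraph ((Fin n₁ ⊕ Fin n₂) ⊕ Fin 2) :=
  SimpleGraph.fromRel (fun x y =>
    match x, y with
    | Sum.inl (Sum.inl a), Sum.inl (Sum.inl b) => (a : ℕ) + 1 = (b : ℕ)
    | Sum.inl (Sum.inr a), Sum.inl (Sum.inr b) => (a : ℕ) + 1 = (b : ℕ)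
    | Sum.inl (Sum.inl a), Sum.inl (Sum.inr b) =>
        (a = k₁ ∧ b = l₁) ∨ (a = k₂ ∧ b = l₂)
    | Sum.inr u, Sum.inl (Sum.inl a) => u = 0 ∧ a = t₁
    | Sum.inr u, Sum.inl (Sum.inr b) => u = 1 ∧ b = t₂
    | _, _ => False)

lemma path_cand {n : ℕ} (t : Fin n) (ht : (t:ℕ)=0 ∨ (t:ℕ)=n-1)
    (A : Finset (Fin n)) (hA : A.Nonempty) (htA : t ∉ A) :
    ∃ v a : Fin n, a ∈ A ∧ v ∉ A ∧
      ((v:ℕ)+1 = a ∨ (a:ℕ)+1 = v) ∧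
      ∀ x : Fin n, x ∈ A → ((v:ℕ)+1 = x ∨ (x:ℕ)+1 = v) → x = a := by
  rcases ht with ht | ht
  · set a := A.min' hA with ha
    have haA : a ∈ A := A.min'_mem hA
    have hpos : 0 < (a:ℕ) := by
      rcases Nat.eq_zero_or_pos (a:ℕ) with h | h
      · exact absurd haA (by
          have : a = t := Fin.ext (by omega)
          rw [this]; exact htA)
      · exact h
    refine ⟨⟨(a:ℕ)-1, by omega⟩, a, haA, ?_, ?_, ?_⟩
    · intro hv
      have := A.min'_le _ hv
      rw [Fin.le_def] at this
      simp only [← ha] at this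
      omega
    · left; simp; omega
    · intro x hx hadj
      have hle := A.min'_le x hx
      rw [Fin.le_def] at hle
      simp only [← ha] at hle
      simp at hadj
      exact Fin.ext (by omega)
  · set a := A.max' hA with ha
    have haA : a ∈ A := A.max'_mem hA
    have hlt : (a:ℕ) < n - 1 := by
      have h1 : (a:ℕ) < n := a.isLt
      have h2 : (a:ℕ) ≠ n - 1 := by
        intro h
        exact htA (by rwa [show t = a from Fin.ext (by omega)])
      omega
    refine ⟨⟨(a:ℕ)+1, by omega⟩, a, haA, ?_, ?_, ?_⟩
    · intro hv
      have := A.le_max' _ hv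
      rw [Fin.le_def] at this
      simp only [← ha] at this
      simp at this
    · right; simp
    · intro x hx hadj
      have hle := A.le_max' x hx
      rw [Fin.le_def] at hle
      simp only [← ha] at hle
      simp at hadj
      exact Fin.ext (by omega)

lemma ded_of_singleton {V : Type} (G : SimpleGraph V) (α : Finset V) (v w : V)
    (hw : w ∈ α) (hv : v ∉ α) (hadj : G.Adj v w)
    (huniq : ∀ x ∈ α, G.Adj v x → x = w) : ded G α v := by
  refine ⟨hv, ?_⟩
  have : α.filter (G.Adj v) = {w} := by
    ext x
    simp only [Finset.mem_filter, Finset.mem_singleton]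
    constructor
    · rintro ⟨hx, hxy⟩; exact huniq x hx hxy
    · rintro rfl; exact ⟨hw, hadj⟩
  rw [this]; simp

theorem stmt8 (n₁ n₂ : ℕ) (hn₁ : 1 ≤ n₁) (hn₂ : 1 ≤ n₂)
    (t₁ k₁ k₂ : Fin n₁) (t₂ l₁ l₂ : Fin n₂)
    -- the inputs are attached at terminal nodes (so each component is SSC)
    (ht₁ : (t₁ : ℕ) = 0 ∨ (t₁ : ℕ) = n₁ - 1)
    (ht₂ : (t₂ : ℕ) = 0 ∨ (t₂ : ℕ) = n₂ - 1)
    -- the two bridge edges are distinct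
    (hbr : (k₁, l₁) ≠ (k₂, l₂))
    -- k₂ and l₂ are both in N(V_I)
    (hk₂ : k₂ = t₁) (hl₂ : l₂ = t₂) :
    -- the merged graph is strongly sign controllable,
    -- regardless of the positions of k₁ and l₁
    ∀ α ⊆ (((Finset.univ.image (Sum.inl ∘ Sum.inl) ∪
             Finset.univ.image (Sum.inl ∘ Sum.inr)) :
              Finset ((Fin n₁ ⊕ Fin n₂) ⊕ Fin 2)) \
          {Sum.inl (Sum.inl t₁), Sum.inl (Sum.inr t₂)}),
      α.Nonempty →
        ∃ v, ded (twoPathsBridged n₁ n₂ t₁ k₁ k₂ t₂ l₁ l₂) α v := by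
  intro α hsub hne
  set G := twoPathsBridged n₁ n₂ t₁ k₁ k₂ t₂ l₁ l₂ with hG
  set A : Finset (Fin n₁) := Finset.univ.filter (fun a => Sum.inl (Sum.inl a) ∈ α) with hA
  set B : Finset (Fin n₂) := Finset.univ.filter (fun b => Sum.inl (Sum.inr b) ∈ α) with hB
  have hmemA : ∀ a : Fin n₁, a ∈ A ↔ Sum.inl (Sum.inl a) ∈ α := by
    intro a; simp [hA]
  have hmemB : ∀ b : Fin n₂, b ∈ B ↔ Sum.inl (Sum.inr b) ∈ α := by
    intro b; simp [hB]
  have ht₁A : t₁ ∉ A := by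
    intro h
    have := hsub ((hmemA t₁).mp h)
    simp [Finset.mem_sdiff] at this
  have ht₂B : t₂ ∉ B := by
    intro h
    have := hsub ((hmemB t₂).mp h)
    simp [Finset.mem_sdiff] at this
  have hshape : ∀ x ∈ α, (∃ a : Fin n₁, a ∈ A ∧ x = Sum.inl (Sum.inl a)) ∨
      (∃ b : Fin n₂, b ∈ B ∧ x = Sum.inl (Sum.inr b)) := by
    intro x hx
    have := hsub hx
    rw [Finset.mem_sdiff] at this
    rcases Finset.mem_union.mp this.1 with h | h
    · simp only [Finset.mem_image, Function.comp] at h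
      obtain ⟨a, -, rfl⟩ := h
      exact Or.inl ⟨a, (hmemA a).mpr hx, rfl⟩
    · simp only [Finset.mem_image, Function.comp] at h
      obtain ⟨b, -, rfl⟩ := h
      exact Or.inr ⟨b, (hmemB b).mpr hx, rfl⟩
  -- left candidate works whenever its hypothesis holds
  have leftCand : ∀ (hAne : A.Nonempty), (∀ v : Fin n₁, v ∉ A → v = k₁ → l₁ ∉ B) →
      ∃ v, ded G α v := by
    intro hAne hcond
    obtain ⟨v, a, haA, hvA, hadj, huniq⟩ := path_cand t₁ ht₁ A hAne ht₁A
    refine ⟨Sum.inl (Sum.inl v), ded_of_singleton G α _ (Sum.inl (Sum.inl a))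
      ((hmemA a).mp haA) (fun h => hvA ((hmemA v).mpr h)) ?_ ?_⟩
    · rw [hG, twoPathsBridged, SimpleGraph.fromRel_adj]
      constructor
      · simp only [ne_eq, Sum.inl.injEq]
        intro h; exact hvA (h ▸ haA)
      · rcases hadj with h | h
        · exact Or.inl h
        · exact Or.inr h
    · intro x hx hxadj
      rcases hshape x hx with ⟨c, hc, rfl⟩ | ⟨d, hd, rfl⟩
      · rw [hG, twoPathsBridged, SimpleGraph.fromRel_adj] at hxadj
        have : (v:ℕ)+1 = c ∨ (c:ℕ)+1 = v := hxadj.2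
        have := huniq c hc this
        rw [this]
      · rw [hG, twoPathsBridged, SimpleGraph.fromRel_adj] at hxadj
        have h2 : (v = k₁ ∧ d = l₁) ∨ (v = k₂ ∧ d = l₂) := by
          rcases hxadj.2 with h | h
          · exact h
          · exact h.elim
        rcases h2 with ⟨hv1, hd1⟩ | ⟨hv2, hd2⟩
        · exact absurd (hd1 ▸ hd) (hcond v hvA hv1)
        · exfalso
          have : Sum.inl (Sum.inr d) ∈ α := (hmemB d).mp hd
          have := hsub this
          rw [Finset.mem_sdiff] at this
          exact this.2 (by simp [hd2, hl₂])
  by_cases hBne : B.Nonempty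
  · obtain ⟨w, b, hbB, hwB, hadjw, huw⟩ := path_cand t₂ ht₂ B hBne ht₂B
    by_cases hbad : w = l₁ ∧ k₁ ∈ A
    · exact leftCand ⟨k₁, hbad.2⟩ (fun v hvA hv => by
        exact absurd (hv ▸ hbad.2 : v ∈ A) hvA)
    · -- right candidate
      refine ⟨Sum.inl (Sum.inr w), ded_of_singleton G α _ (Sum.inl (Sum.inr b))
        ((hmemB b).mp hbB) (fun h => hwB ((hmemB w).mpr h)) ?_ ?_⟩
      · rw [hG, twoPathsBridged, SimpleGraph.fromRel_adj]
        constructor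
        · simp only [ne_eq, Sum.inl.injEq, Sum.inr.injEq]
          intro h; exact hwB (h ▸ hbB)
        · rcases hadjw with h | h
          · exact Or.inl h
          · exact Or.inr h
      · intro x hx hxadj
        rcases hshape x hx with ⟨c, hc, rfl⟩ | ⟨d, hd, rfl⟩
        · exfalso
          rw [hG, twoPathsBridged, SimpleGraph.fromRel_adj] at hxadj
          have h2 : (c = k₁ ∧ w = l₁) ∨ (c = k₂ ∧ w = l₂) := by
            rcases hxadj.2 with h | h
            · exact h.elim
            · exact h
          rcases h2 with ⟨hc1, hw1⟩ | ⟨hc2, hw2⟩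
          · exact hbad ⟨hw1, hc1 ▸ hc⟩
          · exact ht₁A (by rwa [← hk₂, ← hc2])
        · rw [hG, twoPathsBridged, SimpleGraph.fromRel_adj] at hxadj
          have : (w:ℕ)+1 = d ∨ (d:ℕ)+1 = w := by
            rcases hxadj.2 with h | h
            · exact Or.inl h
            · exact Or.inr h
          have := huw d hd this
          rw [this]
  · -- B empty, so A nonempty
    have hAne : A.Nonempty := by
      obtain ⟨x, hx⟩ := hne
      rcases hshape x hx with ⟨a, ha, -⟩ | ⟨b, hb, -⟩
      · exact ⟨a, ha⟩
      · exact absurd ⟨b, hb⟩ hBne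
    exact leftCand hAne (fun v _ _ hl => hBne ⟨l₁, hl⟩)
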